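/- Let I ⊆ ℝ be an open interval and φ⁴, φ⁵, φ⁶ : I → ℝ differentiable, and define v(t,x) = 2x³ + φ⁴(t)x⁴ + φ⁵(t)x⁵ + φ⁶(t)x⁶. Then v solves x²vₜ = v·vₓₓ − (5/6)(vₓ)² + x²vₓ for all (t,x) ∈ I × ℝ if and only if on I the functions satisfy the system dφ⁴/dt = 7φ⁵ − (4/3)(φ⁴)², dφ⁵/dt = 18φ⁶ − (4/3)φ⁴φ⁵, dφ⁶/dt = −(5/6)(φ⁵)² + 2φ⁴φ⁶. -/

import Mathlib

/-- the ansatz `v = 2x³ + φ⁴(t)x⁴ + φ⁵(t)x⁵ + φ⁶(t)x⁶` solves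
`x²vₜ = v·vₓₓ − (5/6)(vₓ)² + x²vₓ` on `I × ℝ` iff `(φ⁴, φ⁵, φ⁶)` solves the reduced system
`φ⁴' = 7φ⁵ − (4/3)(φ⁴)²`, `φ⁵' = 18φ⁶ − (4/3)φ⁴φ⁵`, `φ⁶' = −(5/6)(φ⁵)² + 2φ⁴φ⁶` on `I`. -/
theorem sl2_ansatz_reduction
    (I : Set ℝ) (hI : IsOpen I) (hIc : I.OrdConnected)
    (φ4 φ5 φ6 : ℝ → ℝ)
    (h4 : ∀ t ∈ I, DifferentiableAt ℝ φ4 t)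
    (h5 : ∀ t ∈ I, DifferentiableAt ℝ φ5 t)
    (h6 : ∀ t ∈ I, DifferentiableAt ℝ φ6 t)
    (v : ℝ → ℝ → ℝ)
    (hv : ∀ t x : ℝ, v t x = 2 * x ^ 3 + φ4 t * x ^ 4 + φ5 t * x ^ 5 + φ6 t * x ^ 6) :
    (∀ t ∈ I, ∀ x : ℝ,
        x ^ 2 * deriv (fun s => v s x) t
          = v t x * deriv^[2] (v t) x - (5 / 6) * (deriv (v t) x) ^ 2
            + x ^ 2 * deriv (v t) x) ↔
      (∀ t ∈ I,
        deriv φ4 t = 7 * φ5 t - (4 / 3) * (φ4 t) ^ 2 ∧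
        deriv φ5 t = 18 * φ6 t - (4 / 3) * φ4 t * φ5 t ∧
        deriv φ6 t = -(5 / 6) * (φ5 t) ^ 2 + 2 * φ4 t * φ6 t) := by
  have key : ∀ t ∈ I,
      (∀ x : ℝ,
        x ^ 2 * deriv (fun s => v s x) t
          = v t x * deriv^[2] (v t) x - (5 / 6) * (deriv (v t) x) ^ 2
            + x ^ 2 * deriv (v t) x) ↔
      (deriv φ4 t = 7 * φ5 t - (4 / 3) * (φ4 t) ^ 2 ∧
        deriv φ5 t = 18 * φ6 t - (4 / 3) * φ4 t * φ5 t ∧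
        deriv φ6 t = -(5 / 6) * (φ5 t) ^ 2 + 2 * φ4 t * φ6 t) := by
    intro t ht
    set a := φ4 t with ha
    set b := φ5 t with hb
    set c := φ6 t with hc
    -- time derivative
    have hdt : ∀ x : ℝ, deriv (fun s => v s x) t
        = deriv φ4 t * x ^ 4 + deriv φ5 t * x ^ 5 + deriv φ6 t * x ^ 6 := by
      intro x
      have hfun : (fun s => v s x)
          = fun s => 2 * x ^ 3 + φ4 s * x ^ 4 + φ5 s * x ^ 5 + φ6 s * x ^ 6 :=
        funext fun s => hv s x
      rw [hfun]
      have H : HasDerivAt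
          (fun s => 2 * x ^ 3 + φ4 s * x ^ 4 + φ5 s * x ^ 5 + φ6 s * x ^ 6)
          (deriv φ4 t * x ^ 4 + deriv φ5 t * x ^ 5 + deriv φ6 t * x ^ 6) t := by
        exact ((((h4 t ht).hasDerivAt.mul_const (x ^ 4)).const_add (2 * x ^ 3)).add
          ((h5 t ht).hasDerivAt.mul_const (x ^ 5))).add
          ((h6 t ht).hasDerivAt.mul_const (x ^ 6))
      exact H.deriv
    -- v t as a function
    have hvt : v t = fun x => 2 * x ^ 3 + a * x ^ 4 + b * x ^ 5 + c * x ^ 6 :=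
      funext fun x => hv t x
    -- first space derivative
    have hd1 : deriv (v t)
        = fun x => 6 * x ^ 2 + 4 * a * x ^ 3 + 5 * b * x ^ 4 + 6 * c * x ^ 5 := by
      funext x
      have H : HasDerivAt (fun y : ℝ => 2 * y ^ 3 + a * y ^ 4 + b * y ^ 5 + c * y ^ 6)
          (6 * x ^ 2 + 4 * a * x ^ 3 + 5 * b * x ^ 4 + 6 * c * x ^ 5) x := by
        have := ((((hasDerivAt_pow 3 x).const_mul 2).add
          ((hasDerivAt_pow 4 x).const_mul a)).add
          ((hasDerivAt_pow 5 x).const_mul b)).add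
          ((hasDerivAt_pow 6 x).const_mul c)
        refine this.congr_deriv ?_
        push_cast
        ring
      rw [hvt]
      exact H.deriv
    -- second space derivative
    have hd2 : ∀ x : ℝ, deriv^[2] (v t) x
        = 12 * x + 12 * a * x ^ 2 + 20 * b * x ^ 3 + 30 * c * x ^ 4 := by
      intro x
      have H : HasDerivAt
          (fun y : ℝ => 6 * y ^ 2 + 4 * a * y ^ 3 + 5 * b * y ^ 4 + 6 * c * y ^ 5)
          (12 * x + 12 * a * x ^ 2 + 20 * b * x ^ 3 + 30 * c * x ^ 4) x := by
        have := ((((hasDerivAt_pow 2 x).const_mul 6).add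
          ((hasDerivAt_pow 3 x).const_mul (4 * a))).add
          ((hasDerivAt_pow 4 x).const_mul (5 * b))).add
          ((hasDerivAt_pow 5 x).const_mul (6 * c))
        refine this.congr_deriv ?_
        push_cast
        ring
      show deriv (deriv (v t)) x = _
      rw [hd1]
      exact H.deriv
    constructor
    · intro h
      have e1 := h 1
      have e2 := h (-1)
      have e3 := h 2
      rw [hdt, hd2, hd1, hv] at e1 e2 e3
      norm_num at e1 e2 e3
      refine ⟨by linarith, by linarith, by linarith⟩
    · rintro ⟨h1, h2, h3⟩ x
      rw [hdt, hd2, hd1, hv, h1, h2, h3]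
      ring
  constructor
  · intro h t ht
    exact (key t ht).mp (h t ht)
  · intro h t ht
    exact (key t ht).mpr (h t ht)
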